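/- Let M be a right proper model category whose class of weak equivalences is closed under finite products. Then for all objects X and Y, the function φ : π₀H(X,Y) → [X,Y] sending the class of a cocycle (f,g) to the composite g∘f⁻¹ in the homotopy category is a bijection. -/

import Mathlib

open CategoryTheory CategoryTheory.Limits

universe v u

/-- A (closed) model structure on a category `M` with all finite limits and colimits. -/
structure ModelStr (M : Type u) [Category.{v} M] : Type (max u v) where
  weq : MorphismProperty M
  fib : MorphismProperty M
  cof : MorphismProperty M
  weq_id : ∀ X : M, weq (𝟙 X)
  /-- CM2, two out of three -/
  weq_comp : ∀ {X Y Z : M} (f : X ⟶ Y) (g : Y ⟶ Z), weq f → weq g → weq (f ≫ g)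
  weq_cancel_left : ∀ {X Y Z : M} (f : X ⟶ Y) (g : Y ⟶ Z), weq f → weq (f ≫ g) → weq g
  weq_cancel_right : ∀ {X Y Z : M} (f : X ⟶ Y) (g : Y ⟶ Z), weq g → weq (f ≫ g) → weq f
  /-- CM3: the three classes are closed under retracts. -/
  retracts : ∀ {X Y X' Y' : M} (f : X ⟶ Y) (g : X' ⟶ Y') (i : X ⟶ X') (r : X' ⟶ X)
    (j : Y ⟶ Y') (s : Y' ⟶ Y), i ≫ r = 𝟙 X → j ≫ s = 𝟙 Y → i ≫ g = f ≫ j → g ≫ s = r ≫ f →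
    (weq g → weq f) ∧ (fib g → fib f) ∧ (cof g → cof f)
  /-- CM4: lifting -/
  lifting : ∀ {A B X Y : M} (i : A ⟶ B) (p : X ⟶ Y) (u : A ⟶ X) (v : B ⟶ Y),
    cof i → fib p → (weq i ∨ weq p) → u ≫ p = i ≫ v →
    ∃ l : B ⟶ X, i ≫ l = u ∧ l ≫ p = v
  /-- CM5: factorizations -/
  fact_cof_triv_fib : ∀ {X Y : M} (f : X ⟶ Y),
    ∃ (Z : M) (i : X ⟶ Z) (q : Z ⟶ Y), cof i ∧ fib q ∧ weq q ∧ i ≫ q = f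
  fact_triv_cof_fib : ∀ {X Y : M} (f : X ⟶ Y),
    ∃ (Z : M) (j : X ⟶ Z) (p : Z ⟶ Y), cof j ∧ weq j ∧ fib p ∧ j ≫ p = f

/-- Right properness: weak equivalences are stable under pullback along fibrations. -/
def ModelStr.RightProper {M : Type u} [Category.{v} M] (S : ModelStr M) : Prop :=
  ∀ {P A B C : M} (fst : P ⟶ A) (snd : P ⟶ B) (f : A ⟶ C) (g : B ⟶ C),
    IsPullback fst snd f g → S.weq f → S.fib g → S.weq snd

/-- The weak equivalences are closed under finite products: `f × 1` and `1 × f` are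
weak equivalences whenever `f` is. -/
def ModelStr.WeqClosedUnderProducts {M : Type u} [Category.{v} M] [HasBinaryProducts M]
    (S : ModelStr M) : Prop :=
  ∀ {A B : M} (f : A ⟶ B) (Z : M), S.weq f →
    S.weq (Limits.prod.map f (𝟙 Z)) ∧ S.weq (Limits.prod.map (𝟙 Z) f)

/-- A cocycle from `X` to `Y`: a pair of maps `X ⟵ Z ⟶ Y` whose first leg is a weak
equivalence. -/
structure Cocycle {M : Type u} [Category.{v} M] (W : MorphismProperty M) (X Y : M) :
    Type (max u v) where
  Z : M
  f : Z ⟶ X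
  g : Z ⟶ Y
  hf : W f

/-- A morphism of cocycles `(f,g) → (f',g')` is a map of the middle objects commuting with
both legs.  Path components of the cocycle category are the quotient by the equivalence
relation generated by this relation. -/
def cocycleRel {M : Type u} [Category.{v} M] (W : MorphismProperty M) (X Y : M)
    (c c' : Cocycle W X Y) : Prop :=
  ∃ α : c.Z ⟶ c'.Z, α ≫ c'.f = c.f ∧ α ≫ c'.g = c.g

/-- `π₀H(X,Y)`, the path components of the cocycle category. -/
def pi0H {M : Type u} [Category.{v} M] (W : MorphismProperty M) (X Y : M) :=
  Quot (cocycleRel W X Y)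

/-! ### Auxiliary development -/

namespace CocycleProof

variable {M : Type u} [Category.{v} M] [HasFiniteLimits M]
  (S : ModelStr M)

/-- Postcomposition of a cocycle with an honest map. -/
@[simps]
def Cocycle.post {X A B : M} (c : Cocycle S.weq X A) (h : A ⟶ B) : Cocycle S.weq X B :=
  ⟨c.Z, c.f, c.g ≫ h, c.hf⟩

lemma post_rel {X A B : M} {c c' : Cocycle S.weq X A} (h : A ⟶ B)
    (r : cocycleRel S.weq X A c c') :
    cocycleRel S.weq X B (Cocycle.post S c h) (Cocycle.post S c' h) := by
  obtain ⟨α, h1, h2⟩ := r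
  exact ⟨α, h1, by show α ≫ c'.g ≫ h = c.g ≫ h; rw [← Category.assoc, h2]⟩

section WRep

variable {X A B : M}

noncomputable def facZ (c : Cocycle S.weq X B) : M :=
  (S.fact_triv_cof_fib (prod.lift c.f c.g)).choose

noncomputable def facJ (c : Cocycle S.weq X B) : c.Z ⟶ facZ S c :=
  (S.fact_triv_cof_fib (prod.lift c.f c.g)).choose_spec.choose

noncomputable def facQ (c : Cocycle S.weq X B) : facZ S c ⟶ X ⨯ B :=
  (S.fact_triv_cof_fib (prod.lift c.f c.g)).choose_spec.choose_spec.choose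

lemma facSpec (c : Cocycle S.weq X B) :
    S.cof (facJ S c) ∧ S.weq (facJ S c) ∧ S.fib (facQ S c) ∧
      facJ S c ≫ facQ S c = prod.lift c.f c.g :=
  (S.fact_triv_cof_fib (prod.lift c.f c.g)).choose_spec.choose_spec.choose_spec

variable (hproper : S.RightProper) (hprod : S.WeqClosedUnderProducts)
variable (w : A ⟶ B) (hw : S.weq w)
include hproper hprod hw

omit hproper hprod hw in
lemma q_fst_weq (c : Cocycle S.weq X B) : S.weq (facQ S c ≫ prod.fst) := by
  refine S.weq_cancel_left (facJ S c) _ (facSpec S c).2.1 ?_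
  rw [← Category.assoc, (facSpec S c).2.2.2, prod.lift_fst]
  exact c.hf

lemma snd_weq (c : Cocycle S.weq X B) :
    S.weq (pullback.snd (prod.map (𝟙 X) w) (facQ S c)) :=
  hproper _ _ _ _ (IsPullback.of_hasPullback _ _) ((hprod w X hw).2) (facSpec S c).2.2.1

/-- The "pull back along a weak equivalence `w : A ⟶ B`" operation on cocycles. -/
@[simps]
noncomputable def wrep (c : Cocycle S.weq X B) : Cocycle S.weq X A where
  Z := pullback (prod.map (𝟙 X) w) (facQ S c)
  f := pullback.fst (prod.map (𝟙 X) w) (facQ S c) ≫ prod.fst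
  g := pullback.fst (prod.map (𝟙 X) w) (facQ S c) ≫ prod.snd
  hf := by
    have comm : pullback.fst (prod.map (𝟙 X) w) (facQ S c) ≫ prod.fst
        = pullback.snd (prod.map (𝟙 X) w) (facQ S c) ≫ (facQ S c ≫ prod.fst) := by
      rw [← Category.assoc, ← pullback.condition, Category.assoc, prod.map_fst,
        Category.comp_id]
    rw [comm]
    exact S.weq_comp _ _ (snd_weq S hproper hprod w hw c) (q_fst_weq S c)

lemma wrep_rel {c c' : Cocycle S.weq X B} (r : cocycleRel S.weq X B c c') :
    cocycleRel S.weq X A (wrep S hproper hprod w hw c) (wrep S hproper hprod w hw c') := by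
  obtain ⟨α, h1, h2⟩ := r
  obtain ⟨β, hβ1, hβ2⟩ := S.lifting (facJ S c) (facQ S c') (α ≫ facJ S c') (facQ S c)
    (facSpec S c).1 (facSpec S c').2.2.1 (Or.inl (facSpec S c).2.1)
    (by rw [Category.assoc, (facSpec S c').2.2.2, (facSpec S c).2.2.2,
      prod.comp_lift, h1, h2])
  refine ⟨pullback.lift (pullback.fst _ _) (pullback.snd _ _ ≫ β) ?_, ?_, ?_⟩
  · exact pullback.condition.trans ((congrArg
      (fun t => pullback.snd (prod.map (𝟙 X) w) (facQ S c) ≫ t) hβ2).symm.trans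
      (Category.assoc _ _ _).symm)
  · exact pullback.lift_fst_assoc ..
  · exact pullback.lift_fst_assoc ..

lemma rel_wrep_post (c : Cocycle S.weq X A) :
    cocycleRel S.weq X A c (wrep S hproper hprod w hw (Cocycle.post S c w)) := by
  refine ⟨pullback.lift (prod.lift c.f c.g) (facJ S (Cocycle.post S c w)) ?_, ?_, ?_⟩
  · refine Eq.trans ?_ (facSpec S (Cocycle.post S c w)).2.2.2.symm
    rw [prod.lift_map, Category.comp_id]
    rfl
  · exact (pullback.lift_fst_assoc ..).trans (prod.lift_fst ..)
  · exact (pullback.lift_fst_assoc ..).trans (prod.lift_snd ..)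

lemma wrep_post_mk (d : Cocycle S.weq X B) :
    Quot.mk (cocycleRel S.weq X B) (Cocycle.post S (wrep S hproper hprod w hw d) w)
      = Quot.mk (cocycleRel S.weq X B) d := by
  let mid : Cocycle S.weq X B :=
    ⟨facZ S d, facQ S d ≫ prod.fst, facQ S d ≫ prod.snd, q_fst_weq S d⟩
  have r1 : cocycleRel S.weq X B (Cocycle.post S (wrep S hproper hprod w hw d) w) mid := by
    refine ⟨pullback.snd (prod.map (𝟙 X) w) (facQ S d), ?_, ?_⟩
    · show pullback.snd _ _ ≫ facQ S d ≫ prod.fst = pullback.fst _ _ ≫ prod.fst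
      rw [← Category.assoc, ← pullback.condition, Category.assoc, prod.map_fst,
        Category.comp_id]
    · show pullback.snd _ _ ≫ facQ S d ≫ prod.snd = (pullback.fst _ _ ≫ prod.snd) ≫ w
      rw [← Category.assoc, ← pullback.condition, Category.assoc, prod.map_snd,
        Category.assoc]
  have r2 : cocycleRel S.weq X B d mid := by
    refine ⟨facJ S d, ?_, ?_⟩
    · show facJ S d ≫ facQ S d ≫ prod.fst = d.f
      rw [← Category.assoc, (facSpec S d).2.2.2, prod.lift_fst]
    · show facJ S d ≫ facQ S d ≫ prod.snd = d.g
      rw [← Category.assoc, (facSpec S d).2.2.2, prod.lift_snd]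
  exact (Quot.sound r1).trans (Quot.sound r2).symm

end WRep

/-! ### The corepresented functor `G = π₀H(X,-) : M ⥤ Type` -/

variable (X : M)

noncomputable def Gfun : M ⥤ Type (max u v) where
  obj B := pi0H S.weq X B
  map {A B} h := TypeCat.ofHom (Quot.lift (fun c => Quot.mk _ (Cocycle.post S c h))
    (fun _ _ r => Quot.sound (post_rel S h r)))
  map_id A := by
    ext x
    induction x using Quot.ind
    rename_i c
    show Quot.mk _ (Cocycle.post S c (𝟙 A)) = Quot.mk _ c
    have : c.g ≫ 𝟙 A = c.g := Category.comp_id _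
    unfold Cocycle.post
    rw [this]
  map_comp {A B C} h h' := by
    ext x
    induction x using Quot.ind
    rename_i c
    show Quot.mk _ (Cocycle.post S c (h ≫ h'))
      = Quot.mk _ (Cocycle.post S (Cocycle.post S c h) h')
    unfold Cocycle.post
    rw [Category.assoc]

variable (hproper : S.RightProper) (hprod : S.WeqClosedUnderProducts)
include hproper hprod

noncomputable def Theta {A B : M} (w : A ⟶ B) (hw : S.weq w) :
    pi0H S.weq X B → pi0H S.weq X A :=
  Quot.lift (fun d => Quot.mk _ (wrep S hproper hprod w hw d))
    (fun _ _ r => Quot.sound (wrep_rel S hproper hprod w hw r))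

lemma G_inverts : S.weq.IsInvertedBy (Gfun S X) := by
  intro A B w hw
  rw [isIso_iff_bijective]
  constructor
  · have hleft : ∀ x : pi0H S.weq X A,
        Theta S X hproper hprod w hw ((Gfun S X).map w x) = x := by
      intro x
      induction x using Quot.ind
      rename_i c
      exact (Quot.sound (rel_wrep_post S hproper hprod w hw c)).symm
    exact Function.LeftInverse.injective hleft
  · intro y
    induction y using Quot.ind
    rename_i d
    exact ⟨Theta S X hproper hprod w hw (Quot.mk _ d),
      wrep_post_mk S hproper hprod w hw d⟩

/-! ### The map φ -/

noncomputable def phi {A B : M} : pi0H S.weq A B → (S.weq.Q.obj A ⟶ S.weq.Q.obj B) :=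
  Quot.lift (fun c =>
    (@inv _ _ _ _ (S.weq.Q.map c.f) (S.weq.Q_inverts c.f c.hf)) ≫ S.weq.Q.map c.g)
    (by
      rintro c c' ⟨α, h1, h2⟩
      haveI : IsIso (S.weq.Q.map c.f) := S.weq.Q_inverts c.f c.hf
      haveI : IsIso (S.weq.Q.map c'.f) := S.weq.Q_inverts c'.f c'.hf
      rw [IsIso.inv_comp_eq, ← h1, ← h2, Functor.map_comp, Functor.map_comp,
        Category.assoc, IsIso.hom_inv_id_assoc])

noncomputable def Glift : S.weq.Localization ⥤ Type (max u v) :=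
  Localization.Construction.lift (Gfun S X) (G_inverts S X hproper hprod)

lemma Glift_mapQ {A B : M} (h : A ⟶ B) :
    (Glift S X hproper hprod).map (S.weq.Q.map h) = (Gfun S X).map h := by
  have := Functor.congr_hom (Localization.Construction.fac (Gfun S X)
    (G_inverts S X hproper hprod)) h
  rfl

/-- The property of morphisms in the localization used for the final computation. -/
def Pgood : MorphismProperty (S.weq.Localization) := fun A B β =>
  ∀ x : pi0H S.weq X A.as.obj,
    phi S ((Glift S X hproper hprod).map β x) = phi S x ≫ β

instance : (Pgood S X hproper hprod).IsStableUnderComposition := by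
  constructor
  intro A B C β β' hβ hβ' x
  rw [Functor.map_comp]
  show phi S ((Glift S X hproper hprod).map β' ((Glift S X hproper hprod).map β x)) = _
  exact (hβ' _).trans ((congrArg (· ≫ β') (hβ x)).trans (Category.assoc _ _ _))

lemma Pgood_top : Pgood S X hproper hprod = ⊤ := by
  refine Localization.Construction.morphismProperty_eq_top' _ ?_ ?_
  · intro A B h x
    show phi S ((Glift S X hproper hprod).map (S.weq.Q.map h) x) = phi S x ≫ S.weq.Q.map h
    rw [Glift_mapQ]
    induction x using Quot.ind
    rename_i c
    haveI : IsIso (S.weq.Q.map c.f) := S.weq.Q_inverts c.f c.hf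
    show inv (S.weq.Q.map c.f) ≫ S.weq.Q.map (c.g ≫ h)
      = (inv (S.weq.Q.map c.f) ≫ S.weq.Q.map c.g) ≫ S.weq.Q.map h
    exact (congrArg (inv (S.weq.Q.map c.f) ≫ ·) (S.weq.Q.map_comp c.g h)).trans
      (Category.assoc _ _ _).symm
  · intro A B e he x
    have h1 := he ((Glift S X hproper hprod).map e.inv x)
    have h2 : (Glift S X hproper hprod).map e.hom
        ((Glift S X hproper hprod).map e.inv x) = x := by
      exact (types_comp_apply _ _ x).symm.trans
        ((types_congr_hom (((Glift S X hproper hprod).mapIso e).inv_hom_id) x).trans (types_id_apply _ x))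
    rw [h2] at h1
    rw [h1]
    exact ((Category.assoc _ _ _).trans ((congrArg (_ ≫ ·) e.hom_inv_id).trans
      (Category.comp_id _))).symm

end CocycleProof

open CocycleProof in
theorem cocycle_pi0_bijection {M : Type u} [Category.{v} M]
    [HasFiniteLimits M] [HasFiniteColimits M]
    (S : ModelStr M) (hproper : S.RightProper) (hprod : S.WeqClosedUnderProducts)
    (X Y : M) :
    ∃ φ : pi0H S.weq X Y → (S.weq.Q.obj X ⟶ S.weq.Q.obj Y),
      (∀ c : Cocycle S.weq X Y,
        φ (Quot.mk _ c) =
          (haveI : IsIso (S.weq.Q.map c.f) := S.weq.Q_inverts c.f c.hf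
           inv (S.weq.Q.map c.f)) ≫ S.weq.Q.map c.g) ∧
      Function.Bijective φ := by
  classical
  refine ⟨phi S, fun c => rfl, ?_⟩
  let G' := Glift S X hproper hprod
  let c₀ : pi0H S.weq X X := Quot.mk _ ⟨X, 𝟙 X, 𝟙 X, S.weq_id X⟩
  let ψ : (S.weq.Q.obj X ⟶ S.weq.Q.obj Y) → pi0H S.weq X Y := fun β => G'.map β c₀
  have hgood : ∀ (β : S.weq.Q.obj X ⟶ S.weq.Q.obj Y),
      ∀ x : pi0H S.weq X X, phi S (G'.map β x) = phi S x ≫ β := by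
    intro β
    have : Pgood S X hproper hprod β := by
      rw [Pgood_top S X hproper hprod]
      trivial
    exact this
  constructor
  · -- injective : ψ ∘ φ = id
    have hψφ : ∀ x : pi0H S.weq X Y, ψ (phi S x) = x := by
      intro x
      induction x using Quot.ind
      rename_i c
      haveI : IsIso (S.weq.Q.map c.f) := S.weq.Q_inverts c.f c.hf
      show G'.map (inv (S.weq.Q.map c.f) ≫ S.weq.Q.map c.g) c₀ = Quot.mk _ c
      rw [Functor.map_comp]
      have hmapQ : ∀ {A B : M} (h : A ⟶ B), G'.map (S.weq.Q.map h) = (Gfun S X).map h :=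
        fun h => Glift_mapQ S X hproper hprod h
      have hinv : G'.map (inv (S.weq.Q.map c.f)) c₀ = Quot.mk _ ⟨c.Z, c.f, 𝟙 c.Z, c.hf⟩ := by
        have happ : G'.map (S.weq.Q.map c.f) (Quot.mk _ ⟨c.Z, c.f, 𝟙 c.Z, c.hf⟩) = c₀ := by
          rw [hmapQ]
          show Quot.mk _ (Cocycle.post S ⟨c.Z, c.f, 𝟙 c.Z, c.hf⟩ c.f) = c₀
          refine Quot.sound ⟨c.f, Category.comp_id c.f, ?_⟩
          show c.f ≫ 𝟙 X = 𝟙 c.Z ≫ c.f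
          rw [Category.comp_id, Category.id_comp]
        rw [CategoryTheory.Functor.map_inv, ← happ]
        exact (types_comp_apply _ _ _).symm.trans ((types_congr_hom
          (IsIso.hom_inv_id (G'.map (S.weq.Q.map c.f))) _).trans (types_id_apply _ _))
      show G'.map (S.weq.Q.map c.g) (G'.map (inv (S.weq.Q.map c.f)) c₀) = Quot.mk _ c
      rw [hinv, hmapQ]
      show Quot.mk _ (Cocycle.post S ⟨c.Z, c.f, 𝟙 c.Z, c.hf⟩ c.g) = Quot.mk _ c
      have : (𝟙 c.Z) ≫ c.g = c.g := Category.id_comp _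
      unfold Cocycle.post
      dsimp
      rw [this]
    intro x y hxy
    rw [← hψφ x, ← hψφ y, hxy]
  · -- surjective : φ ∘ ψ = id
    intro β
    refine ⟨ψ β, ?_⟩
    have := hgood β c₀
    refine this.trans ?_
    show (inv (S.weq.Q.map (𝟙 X)) ≫ S.weq.Q.map (𝟙 X)) ≫ β = β
    haveI : IsIso (S.weq.Q.map (𝟙 X)) := S.weq.Q_inverts _ (S.weq_id X)
    rw [IsIso.inv_hom_id, Category.id_comp]
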